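/- Let (ξ_i, 𝓕_i)_{i=1..n} be a martingale difference sequence satisfying E[|ξ_i|^{2+ρ} e^{ξ_i⁺/ε} | 𝓕_{i-1}] ≤ ε^ρ E[ξ_i² | 𝓕_{i-1}] a.s. for some ρ ∈ (0,1] and ε ∈ (0, 1/2], and suppose |Σ_{i=1}^n E[ξ_i² | 𝓕_{i-1}] − 1| ≤ δ² a.s. for some δ ∈ [0, 1/2]. Then for every λ with 0 ≤ λ ≤ 1/ε, the conjugate drift B_n(λ) = Σ_{i=1}^n E[ξ_i e^{λξ_i} | 𝓕_{i-1}] / E[e^{λξ_i} | 𝓕_{i-1}] satisfies |B_n(λ) − λ| ≤ λδ² + 6 λ^{1+ρ} ε^ρ almost surely. -/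

import Mathlib

open MeasureTheory Finset

section CDBAux

open Real Filter

lemma cdb_exp_quad {t : ℝ} (ht : |t| ≤ 1) : |Real.exp t - 1 - t| ≤ 3/4 * t^2 := by
  have h := Real.exp_bound ht (n := 2) (by norm_num)
  simp [Finset.sum_range_succ, Nat.factorial] at h
  calc |Real.exp t - 1 - t| = |Real.exp t - (1 + t)| := by ring_nf
    _ ≤ |t|^2 * (3/(2*2)) := by convert h using 2; norm_num
    _ = 3/4 * t^2 := by rw [sq_abs]; ring

lemma cdb_P1 {ρ ε lam : ℝ} (hρ0 : 0 < ρ) (hρ1 : ρ ≤ 1) (hε0 : 0 < ε)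
    (hlam0 : 0 ≤ lam) (hlam1 : lam * ε ≤ 1) (x : ℝ) :
    |x * Real.exp (lam * x) - x - lam * x ^ 2|
      ≤ lam ^ (1 + ρ) * (|x| ^ (2 + ρ) * Real.exp (max x 0 / ε)) := by
  have hE1 : 1 ≤ Real.exp (max x 0 / ε) :=
    Real.one_le_exp (div_nonneg (le_max_right _ _) hε0.le)
  rcases eq_or_lt_of_le hlam0 with h0 | hlam
  · subst h0
    simp [Real.zero_rpow (by positivity : (1:ℝ) + ρ ≠ 0)]
  rcases eq_or_ne x 0 with h0 | hx0
  · subst h0; simp; positivity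
  have hxa : 0 < |x| := abs_pos.2 hx0
  have key : |x * Real.exp (lam * x) - x - lam * x ^ 2|
      = |x| * |Real.exp (lam * x) - 1 - lam * x| := by
    rw [← abs_mul]; ring_nf
  have hexpmax : Real.exp (lam * x) ≤ Real.exp (max x 0 / ε) := by
    apply Real.exp_le_exp.2
    rcases le_total x 0 with hx | hx
    · have : lam * x ≤ 0 := mul_nonpos_of_nonneg_of_nonpos hlam0 hx
      exact this.trans (div_nonneg (le_max_right _ _) hε0.le)
    · rw [max_eq_left hx]
      have hl : lam ≤ 1/ε := (le_div_iff₀ hε0).2 hlam1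
      calc lam * x ≤ (1/ε) * x := mul_le_mul_of_nonneg_right hl hx
        _ = x / ε := by ring
  by_cases hc : lam * |x| ≤ 1
  · -- small case
    have ht : |lam * x| ≤ 1 := by rwa [abs_mul, abs_of_nonneg hlam0]
    have h1 := cdb_exp_quad ht
    have h2 : |x| * |Real.exp (lam * x) - 1 - lam * x| ≤ 3/4 * (lam^2 * |x|^3) := by
      calc |x| * |Real.exp (lam * x) - 1 - lam * x| ≤ |x| * (3/4 * (lam*x)^2) :=
            mul_le_mul_of_nonneg_left h1 (abs_nonneg x)
        _ = 3/4 * (lam^2 * |x|^3) := by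
            rw [show (lam*x)^2 = lam^2 * |x|^2 by rw [mul_pow, sq_abs]]
            ring
    have h3 : lam^2 * |x|^3 ≤ lam ^ (1+ρ) * |x| ^ (2+ρ) := by
      have hu : (0:ℝ) < lam * |x| := by positivity
      have e1 : lam^2 * |x|^3 = (lam*|x|) ^ ((1:ℝ)+ρ) * ((lam*|x|) ^ ((1:ℝ)-ρ) * |x|) := by
        rw [← mul_assoc, ← Real.rpow_add hu, show (1:ℝ)+ρ+(1-ρ) = 2 by ring,
          show ((2:ℝ)) = ((2:ℕ):ℝ) by norm_num, Real.rpow_natCast]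
        ring
      have e2 : lam ^ ((1:ℝ)+ρ) * |x| ^ ((2:ℝ)+ρ) = (lam*|x|) ^ ((1:ℝ)+ρ) * |x| := by
        rw [Real.mul_rpow hlam0 (abs_nonneg x), show (2:ℝ)+ρ = (1+ρ)+1 by ring,
          Real.rpow_add hxa, Real.rpow_one]
        ring
      rw [e1, e2]
      apply mul_le_mul_of_nonneg_left _ (by positivity)
      calc (lam*|x|) ^ ((1:ℝ)-ρ) * |x| ≤ 1 * |x| := by
            apply mul_le_mul_of_nonneg_right _ (abs_nonneg x)
            exact Real.rpow_le_one hu.le hc (by linarith)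
        _ = |x| := by ring
    rw [key]
    calc |x| * |Real.exp (lam * x) - 1 - lam * x| ≤ 3/4 * (lam^2 * |x|^3) := h2
      _ ≤ lam ^ (1+ρ) * |x| ^ (2+ρ) := by nlinarith [h3, sq_nonneg lam, pow_nonneg (abs_nonneg x) 3, mul_nonneg (sq_nonneg lam) (pow_nonneg (abs_nonneg x) 3)]
      _ ≤ lam ^ (1 + ρ) * (|x| ^ (2 + ρ) * Real.exp (max x 0 / ε)) := by
          rw [← mul_assoc]
          exact le_mul_of_one_le_right (by positivity) hE1
  · -- large case : 1 < lam * |x|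
    push_neg at hc
    rw [key]
    rcases lt_or_gt_of_ne hx0 with hxneg | hxpos
    · -- x < 0
      have hax : |x| = -x := abs_of_neg hxneg
      have ht0 : lam * x ≤ 0 := mul_nonpos_of_nonneg_of_nonpos hlam0 hxneg.le
      have he1 : Real.exp (lam*x) ≤ 1 := Real.exp_le_one_iff.2 ht0
      have hge : 0 ≤ Real.exp (lam*x) - 1 - lam*x := by
        nlinarith [Real.add_one_le_exp (lam*x)]
      have habs : |Real.exp (lam * x) - 1 - lam * x| ≤ lam * |x| := by
        rw [abs_of_nonneg hge, hax]; nlinarith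
      have h2 : |x| * (lam * |x|) ≤ lam ^ (1+ρ) * |x| ^ (2+ρ) := by
        have hu : (1:ℝ) ≤ lam * |x| := hc.le
        have e2 : lam ^ ((1:ℝ)+ρ) * |x| ^ ((2:ℝ)+ρ) = (lam*|x|) ^ ((1:ℝ)+ρ) * |x| := by
          rw [Real.mul_rpow hlam0 (abs_nonneg x), show (2:ℝ)+ρ = (1+ρ)+1 by ring,
            Real.rpow_add hxa, Real.rpow_one]
          ring
        rw [e2]
        have : lam * |x| ≤ (lam*|x|) ^ ((1:ℝ)+ρ) := by
          calc lam * |x| = (lam*|x|) ^ ((1:ℝ)) := (Real.rpow_one _).symm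
            _ ≤ (lam*|x|) ^ ((1:ℝ)+ρ) := Real.rpow_le_rpow_of_exponent_le hu (by linarith)
        nlinarith [abs_nonneg x]
      calc |x| * |Real.exp (lam * x) - 1 - lam * x| ≤ |x| * (lam * |x|) :=
            mul_le_mul_of_nonneg_left habs (abs_nonneg x)
        _ ≤ lam ^ (1+ρ) * |x| ^ (2+ρ) := h2
        _ ≤ lam ^ (1 + ρ) * (|x| ^ (2 + ρ) * Real.exp (max x 0 / ε)) := by
            rw [← mul_assoc]
            exact le_mul_of_one_le_right (by positivity) hE1
    · -- x > 0
      have hax : |x| = x := abs_of_pos hxpos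
      have ht1 : 0 ≤ lam * x := by positivity
      have hge : 0 ≤ Real.exp (lam*x) - 1 - lam*x := by
        nlinarith [Real.add_one_le_exp (lam*x)]
      have habs : |Real.exp (lam * x) - 1 - lam * x| ≤ Real.exp (lam*x) := by
        rw [abs_of_nonneg hge]; nlinarith
      have h2 : x ≤ lam ^ (1+ρ) * x ^ (2+ρ) := by
        have hu : (1:ℝ) ≤ lam * x := by rw [hax] at hc; exact hc.le
        have e2 : lam ^ ((1:ℝ)+ρ) * x ^ ((2:ℝ)+ρ) = (lam*x) ^ ((1:ℝ)+ρ) * x := by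
          rw [Real.mul_rpow hlam0 hxpos.le, show (2:ℝ)+ρ = (1+ρ)+1 by ring,
            Real.rpow_add hxpos, Real.rpow_one]
          ring
        rw [e2]
        nlinarith [Real.one_le_rpow hu (by linarith : (0:ℝ) ≤ 1+ρ)]
      calc |x| * |Real.exp (lam * x) - 1 - lam * x|
            ≤ (lam ^ (1+ρ) * x ^ (2+ρ)) * Real.exp (lam*x) := by
            rw [hax]
            exact mul_le_mul h2 habs (abs_nonneg _) (by positivity)
        _ ≤ lam ^ (1 + ρ) * (|x| ^ (2 + ρ) * Real.exp (max x 0 / ε)) := by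
            rw [hax, mul_assoc]
            exact mul_le_mul_of_nonneg_left
              (mul_le_mul_of_nonneg_left hexpmax (by positivity)) (by positivity)

lemma cdb_P2 {ρ ε lam : ℝ} (hρ0 : 0 < ρ) (hρ1 : ρ ≤ 1) (hε0 : 0 < ε)
    (hlam0 : 0 ≤ lam) (hlam1 : lam * ε ≤ 1) (x : ℝ) :
    Real.exp (lam * x) - 1 - lam * x
      ≤ 3/4 * (lam^2 * x^2) + lam^2/ε^ρ * (|x| ^ (2 + ρ) * Real.exp (max x 0 / ε)) := by
  have hE1 : 1 ≤ Real.exp (max x 0 / ε) :=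
    Real.one_le_exp (div_nonneg (le_max_right _ _) hε0.le)
  have hεhan : (0:ℝ) < ε ^ ρ := Real.rpow_pos_of_pos hε0 ρ
  by_cases hc : lam * |x| ≤ 1
  · have ht : |lam * x| ≤ 1 := by rwa [abs_mul, abs_of_nonneg hlam0]
    have h1 := cdb_exp_quad ht
    have h2 : Real.exp (lam*x) - 1 - lam*x ≤ 3/4 * (lam^2 * x^2) := by
      have := (abs_le.1 h1).2
      calc Real.exp (lam*x) - 1 - lam*x ≤ 3/4*(lam*x)^2 := this
        _ = 3/4 * (lam^2*x^2) := by ring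
    have h3 : 0 ≤ lam^2/ε^ρ * (|x| ^ (2 + ρ) * Real.exp (max x 0 / ε)) := by positivity
    linarith
  · push_neg at hc
    have hlam : 0 < lam := by
      rcases hlam0.eq_or_lt with h | h
      · exfalso; rw [← h] at hc; simp at hc; linarith
      · exact h
    have hxa : 0 < |x| := by
      by_contra h
      push_neg at h
      have : |x| = 0 := le_antisymm h (abs_nonneg x)
      rw [this] at hc; simp at hc; linarith
    -- ε < |x|
    have hεx : ε ≤ |x| := by
      by_contra h
      push_neg at h
      have : lam * |x| ≤ lam * ε := mul_le_mul_of_nonneg_left h.le hlam0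
      linarith
    -- x^2 * ε^ρ ≤ |x|^(2+ρ)
    have hx2 : x^2 * ε^ρ ≤ |x| ^ ((2:ℝ) + ρ) := by
      have e1 : |x| ^ ((2:ℝ)+ρ) = x^2 * |x| ^ ρ := by
        rw [Real.rpow_add hxa, show ((2:ℝ)) = ((2:ℕ):ℝ) by norm_num, Real.rpow_natCast,
          sq_abs]
      rw [e1]
      exact mul_le_mul_of_nonneg_left (Real.rpow_le_rpow hε0.le hεx hρ0.le) (sq_nonneg x)
    have key : Real.exp (lam*x) - 1 - lam*x ≤ lam^2 * x^2 * Real.exp (max x 0 / ε) := by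
      rcases le_total x 0 with hx | hx
      · have ht0 : lam * x ≤ 0 := mul_nonpos_of_nonneg_of_nonpos hlam0 hx
        have he1 : Real.exp (lam*x) ≤ 1 := Real.exp_le_one_iff.2 ht0
        have h1 : Real.exp (lam*x) - 1 - lam*x ≤ lam * |x| := by
          rw [abs_of_nonpos hx]; nlinarith
        have h2 : lam * |x| ≤ lam^2 * x^2 := by
          have h2a : 1 * (lam * |x|) ≤ (lam * |x|) * (lam * |x|) :=
            mul_le_mul_of_nonneg_right hc.le (by positivity)
          have h2b : (lam * |x|) * (lam * |x|) = lam^2 * x^2 := by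
            have := abs_mul_abs_self x
            nlinarith [this]
          linarith [h2a, h2b.le, h2b.ge]
        calc Real.exp (lam*x) - 1 - lam*x ≤ lam^2 * x^2 := le_trans h1 h2
          _ ≤ lam^2 * x^2 * Real.exp (max x 0 / ε) := le_mul_of_one_le_right (by positivity) hE1
      · have hexpmax : Real.exp (lam * x) ≤ Real.exp (max x 0 / ε) := by
          apply Real.exp_le_exp.2
          rw [max_eq_left hx]
          have hl : lam ≤ 1/ε := (le_div_iff₀ hε0).2 hlam1
          calc lam * x ≤ (1/ε) * x := mul_le_mul_of_nonneg_right hl hx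
            _ = x / ε := by ring
        have h1 : Real.exp (lam*x) - 1 - lam*x ≤ Real.exp (lam*x) := by
          nlinarith
        have h2 : (1:ℝ) ≤ lam^2 * x^2 := by
          rw [abs_of_nonneg hx] at hc
          nlinarith
        calc Real.exp (lam*x) - 1 - lam*x ≤ Real.exp (lam*x) := h1
          _ = 1 * Real.exp (lam*x) := by ring
          _ ≤ (lam^2*x^2) * Real.exp (max x 0 / ε) :=
              mul_le_mul h2 hexpmax (Real.exp_pos _).le (by positivity)
    have h4 : lam^2 * x^2 * Real.exp (max x 0 / ε)
        ≤ lam^2/ε^ρ * (|x| ^ (2 + ρ) * Real.exp (max x 0 / ε)) := by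
      have hx2' : x^2 ≤ |x| ^ ((2:ℝ)+ρ) / ε^ρ := (le_div_iff₀ hεhan).2 hx2
      calc lam^2 * x^2 * Real.exp (max x 0 / ε)
          ≤ lam^2 * (|x| ^ ((2:ℝ)+ρ)/ε^ρ) * Real.exp (max x 0 / ε) :=
            mul_le_mul_of_nonneg_right
              (mul_le_mul_of_nonneg_left hx2' (sq_nonneg lam)) (Real.exp_pos _).le
        _ = lam^2/ε^ρ * (|x| ^ (2+ρ) * Real.exp (max x 0 / ε)) := by ring
    have h5 : 0 ≤ 3/4 * (lam^2 * x^2) := by positivity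
    linarith

lemma cdb_P3 {ρ ε : ℝ} (hρ0 : 0 < ρ) (hε0 : 0 < ε) {s : ℝ} (hs : 0 < s) (x : ℝ) :
    x ^ 2 ≤ (2/(2+ρ)) * (|x| ^ (2 + ρ) * Real.exp (max x 0 / ε)) / s ^ ((2+ρ)/2)
      + (ρ/(2+ρ)) * s ^ ((2+ρ)/ρ) := by
  have h2ρ : (0:ℝ) < 2 + ρ := by linarith
  have hpq : Real.HolderConjugate ((2+ρ)/2) ((2+ρ)/ρ) := by
    rw [Real.holderConjugate_iff]
    constructor
    · rw [lt_div_iff₀ (by norm_num : (0:ℝ) < 2)]; linarith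
    · field_simp
  have hy := Real.young_inequality_of_nonneg
    (div_nonneg (sq_nonneg x) hs.le) hs.le hpq
  have hab : x^2/s * s = x^2 := div_mul_cancel₀ _ hs.ne'
  rw [hab] at hy
  have hap : (x^2/s) ^ ((2+ρ)/2) = |x| ^ ((2:ℝ)+ρ) / s ^ ((2+ρ)/2) := by
    rw [Real.div_rpow (sq_nonneg x) hs.le]
    congr 1
    rw [← sq_abs x, ← Real.rpow_natCast |x| 2, ← Real.rpow_mul (abs_nonneg x)]
    norm_num
    rw [show 2 * ((2+ρ)/2) = 2 + ρ by ring]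
  rw [hap] at hy
  have hE1 : 1 ≤ Real.exp (max x 0 / ε) :=
    Real.one_le_exp (div_nonneg (le_max_right _ _) hε0.le)
  have hmono : |x| ^ ((2:ℝ)+ρ) / s ^ ((2+ρ)/2) / ((2+ρ)/2)
      ≤ (2/(2+ρ)) * (|x| ^ (2 + ρ) * Real.exp (max x 0 / ε)) / s ^ ((2+ρ)/2) := by
    have hsp : (0:ℝ) < s ^ ((2+ρ)/2) := Real.rpow_pos_of_pos hs _
    rw [div_div, div_le_div_iff₀ (by positivity) (by positivity)]
    have hxx : |x| ^ ((2:ℝ)+ρ) ≤ |x| ^ ((2:ℝ)+ρ) * Real.exp (max x 0 / ε) :=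
      le_mul_of_one_le_right (by positivity) hE1
    calc |x| ^ ((2:ℝ)+ρ) * s ^ ((2+ρ)/2)
        ≤ (|x| ^ ((2:ℝ)+ρ) * Real.exp (max x 0/ε)) * s ^ ((2+ρ)/2) :=
          mul_le_mul_of_nonneg_right hxx hsp.le
      _ ≤ 2/(2+ρ) * (|x| ^ (2+ρ) * Real.exp (max x 0/ε)) * (s ^ ((2+ρ)/2) * ((2+ρ)/2)) := by
          rw [show 2/(2+ρ) * (|x| ^ ((2:ℝ)+ρ) * Real.exp (max x 0/ε)) * (s ^ ((2+ρ)/2) * ((2+ρ)/2))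
              = (|x| ^ ((2:ℝ)+ρ) * Real.exp (max x 0/ε)) * s ^ ((2+ρ)/2) * (2/(2+ρ) * ((2+ρ)/2)) by ring,
            show 2/(2+ρ) * ((2+ρ)/2) = 1 by field_simp]
          ring_nf
          exact le_refl _
  have hq : s ^ ((2+ρ)/ρ) / ((2+ρ)/ρ) = (ρ/(2+ρ)) * s ^ ((2+ρ)/ρ) := by
    rw [div_div_eq_mul_div]; ring
  calc x^2 ≤ |x| ^ ((2:ℝ)+ρ) / s ^ ((2+ρ)/2) / ((2+ρ)/2) + s ^ ((2+ρ)/ρ) / ((2+ρ)/ρ) := hy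
    _ ≤ (2/(2+ρ)) * (|x| ^ (2 + ρ) * Real.exp (max x 0 / ε)) / s ^ ((2+ρ)/2)
        + (ρ/(2+ρ)) * s ^ ((2+ρ)/ρ) := by rw [← hq]; exact add_le_add_left hmono _

lemma cdb_vsmall {ρ ε v : ℝ} (hρ0 : 0 < ρ) (hρ1 : ρ ≤ 1) (hε0 : 0 < ε) (hv0 : 0 ≤ v)
    (h : ∀ q : ℚ, 0 < (q:ℝ) →
      v ≤ (2/(2+ρ)) * (ε ^ ρ * v) / (q:ℝ) ^ ((2+ρ)/2) + (ρ/(2+ρ)) * (q:ℝ) ^ ((2+ρ)/ρ)) :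
    v ≤ ε ^ 2 := by
  rcases hv0.eq_or_lt with h0 | hv
  · rw [← h0]; positivity
  have h2ρ : (0:ℝ) < 2 + ρ := by linarith
  set a : ℝ := ε ^ ρ * v with ha_def
  have ha : 0 < a := by positivity
  set t : ℝ := a ^ (2*ρ/(2+ρ)^2) with ht_def
  have ht : 0 < t := Real.rpow_pos_of_pos ha _
  set φ : ℝ → ℝ := fun s => (2/(2+ρ)) * a / s ^ ((2+ρ)/2) + (ρ/(2+ρ)) * s ^ ((2+ρ)/ρ)
    with hφ_def
  -- v ≤ φ t by continuity and density of rationals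
  have hvφ : v ≤ φ t := by
    have hcont : ContinuousAt φ t := by
      apply ContinuousAt.add
      · exact (continuousAt_const.div
          (Real.continuousAt_rpow_const _ _ (Or.inl ht.ne'))
          (Real.rpow_pos_of_pos ht _).ne')
      · exact continuousAt_const.mul (Real.continuousAt_rpow_const _ _ (Or.inl ht.ne'))
    -- rational sequence decreasing to t
    have hseq : ∀ n : ℕ, ∃ q : ℚ, t < (q:ℝ) ∧ (q:ℝ) < t + 1/(n+1) :=
      fun n => exists_rat_btwn (lt_add_of_pos_right t (by positivity))
    choose qs hq1 hq2 using hseq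
    have htend : Tendsto (fun n : ℕ => ((qs n : ℝ))) atTop (nhds t) := by
      have h1 : Tendsto (fun n : ℕ => t + 1/(n+1:ℝ)) atTop (nhds (t+0)) :=
        tendsto_const_nhds.add tendsto_one_div_add_atTop_nhds_zero_nat
      rw [add_zero] at h1
      exact tendsto_of_tendsto_of_tendsto_of_le_of_le tendsto_const_nhds h1
        (fun n => (hq1 n).le) (fun n => (hq2 n).le)
    have hcomp : Tendsto (fun n => φ (qs n)) atTop (nhds (φ t)) :=
      (hcont.tendsto).comp htend
    refine ge_of_tendsto hcomp (Eventually.of_forall fun n => ?_)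
    have := h (qs n) (lt_trans ht (hq1 n))
    calc v ≤ (2/(2+ρ)) * (ε^ρ*v) / (qs n:ℝ) ^ ((2+ρ)/2) + (ρ/(2+ρ)) * (qs n:ℝ) ^ ((2+ρ)/ρ) := this
      _ = φ (qs n) := by rw [hφ_def]
  -- compute φ t = a ^ (2/(2+ρ))
  have hφt : φ t = a ^ (2/(2+ρ)) := by
    have e1 : t ^ ((2+ρ)/2) = a ^ (ρ/(2+ρ)) := by
      rw [ht_def, ← Real.rpow_mul ha.le]
      congr 1
      field_simp
    have e2 : t ^ ((2+ρ)/ρ) = a ^ (2/(2+ρ)) := by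
      rw [ht_def, ← Real.rpow_mul ha.le]
      congr 1
      field_simp
    have e3 : a / a ^ (ρ/(2+ρ)) = a ^ (2/(2+ρ)) := by
      rw [show a / a ^ (ρ/(2+ρ)) = a ^ (1:ℝ) / a ^ (ρ/(2+ρ)) by rw [Real.rpow_one],
        ← Real.rpow_sub ha]
      congr 1
      field_simp
      ring
    rw [hφ_def]
    simp only
    rw [e1, e2, mul_div_assoc, e3, ← add_mul]
    rw [show 2/(2+ρ) + ρ/(2+ρ) = 1 by field_simp]
    ring
  rw [hφt] at hvφ
  -- now v ≤ a ^ (2/(2+ρ)) with a = ε^ρ v implies v ≤ ε^2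
  have h1 : v ^ ((2+ρ)/2) ≤ a := by
    calc v ^ ((2+ρ)/2) ≤ (a ^ (2/(2+ρ))) ^ ((2+ρ)/2) :=
          Real.rpow_le_rpow hv0 hvφ (by positivity)
      _ = a := by
          rw [← Real.rpow_mul ha.le, show 2/(2+ρ) * ((2+ρ)/2) = 1 by field_simp, Real.rpow_one]
  have h2 : v * v ^ (ρ/2) ≤ ε ^ ρ * v := by
    calc v * v ^ (ρ/2) = v ^ ((2+ρ)/2) := by
          rw [show (2+ρ)/2 = 1 + ρ/2 by ring, Real.rpow_add hv, Real.rpow_one]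
      _ ≤ ε ^ ρ * v := h1
  have h3 : v ^ (ρ/2) ≤ ε ^ ρ := by
    have h2' : v ^ (ρ/2) * v ≤ ε ^ ρ * v := by nlinarith [h2]
    exact le_of_mul_le_mul_right h2' hv
  have h4 : ε ^ ρ = (ε^2 : ℝ) ^ (ρ/2) := by
    rw [← Real.rpow_natCast ε 2, ← Real.rpow_mul hε0.le]
    norm_num
    rw [show (2:ℝ)*(ρ/2) = ρ by ring]
  rw [h4] at h3
  exact (Real.rpow_le_rpow_iff hv0 (by positivity) (by positivity)).1 h3

set_option maxHeartbeats 1000000 in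
lemma cdb_main_arith {ρ ε δ lam : ℝ} (I : Finset ℕ) (v A f g : ℕ → ℝ)
    (hρ0 : 0 < ρ) (hρ1 : ρ ≤ 1) (hε0 : 0 < ε) (hδ0 : 0 ≤ δ)
    (hlam0 : 0 ≤ lam) (hlam1 : lam * ε ≤ 1)
    (hv0 : ∀ i ∈ I, 0 ≤ v i) (hA0 : ∀ i ∈ I, 0 ≤ A i)
    (hAv : ∀ i ∈ I, A i ≤ ε ^ ρ * v i)
    (hg1 : ∀ i ∈ I, 1 ≤ g i) (hf0 : ∀ i ∈ I, 0 ≤ f i)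
    (hfv : ∀ i ∈ I, |f i - lam * v i| ≤ lam ^ (1+ρ) * A i)
    (hgb : ∀ i ∈ I, g i - 1 ≤ 3/4 * (lam^2 * v i) + lam^2/ε^ρ * A i)
    (hvε : ∀ i ∈ I, v i ≤ ε ^ 2)
    (hS : |(∑ i ∈ I, v i) - 1| ≤ δ ^ 2) (hδ1 : δ^2 ≤ 1/4) :
    |(∑ i ∈ I, f i / g i) - lam| ≤ lam * δ ^ 2 + 6 * lam ^ (1 + ρ) * ε ^ ρ := by
  have hεp : (0:ℝ) < ε ^ ρ := Real.rpow_pos_of_pos hε0 ρ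
  rcases hlam0.eq_or_lt with h0 | hlam
  · -- lam = 0
    have hz : (0:ℝ) ^ ((1:ℝ)+ρ) = 0 := Real.zero_rpow (by positivity)
    rw [← h0]
    rw [← h0] at hfv
    have : ∀ i ∈ I, f i / g i = 0 := by
      intro i hi
      have h1 := hfv i hi
      rw [hz] at h1
      have hfz : f i = 0 := by
        have h2 := abs_le.1 h1
        nlinarith [h2.1, h2.2]
      rw [hfz, zero_div]
    rw [Finset.sum_congr rfl this]
    simp [hz]
  -- lam > 0
  have hS54 : ∑ i ∈ I, v i ≤ 5/4 := by
    have := (abs_le.1 hS).2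
    linarith
  have hSv0 : 0 ≤ ∑ i ∈ I, v i := Finset.sum_nonneg hv0
  have hC0 : 0 ≤ lam ^ (1+ρ) * ε ^ ρ := by positivity
  -- lam^(1+ρ) * ε^ρ ≤ lam
  have hkey1 : lam ^ ((1:ℝ)+ρ) * ε ^ ρ ≤ lam := by
    have : lam ^ ((1:ℝ)+ρ) * ε ^ ρ = lam * (lam*ε) ^ ρ := by
      rw [Real.rpow_add hlam, Real.rpow_one, Real.mul_rpow hlam.le hε0.le]
      ring
    rw [this]
    calc lam * (lam*ε) ^ ρ ≤ lam * 1 :=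
          mul_le_mul_of_nonneg_left
            (Real.rpow_le_one (by positivity) hlam1 hρ0.le) hlam.le
      _ = lam := by ring
  -- lam^3 * ε^2 ≤ lam^(1+ρ) * ε^ρ
  have hkey2 : lam^3 * ε^2 ≤ lam ^ ((1:ℝ)+ρ) * ε ^ ρ := by
    have e1 : lam^3 * ε^2 = lam ^ ((1:ℝ)+ρ) * (lam ^ ((2:ℝ)-ρ) * ε^2) := by
      rw [← mul_assoc, ← Real.rpow_add hlam, show (1:ℝ)+ρ+(2-ρ) = 3 by ring,
        show ((3:ℝ)) = ((3:ℕ):ℝ) by norm_num, Real.rpow_natCast]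
    have e2 : lam ^ ((2:ℝ)-ρ) * ε^2 ≤ ε ^ ρ := by
      have hle : lam ≤ 1/ε := by
        rw [le_div_iff₀ hε0]; exact hlam1
      have h1 : lam ^ ((2:ℝ)-ρ) ≤ (1/ε) ^ ((2:ℝ)-ρ) :=
        Real.rpow_le_rpow hlam.le hle (by linarith)
      have h2 : (1/ε) ^ ((2:ℝ)-ρ) * ε^2 = ε ^ ρ := by
        rw [one_div, Real.inv_rpow hε0.le, ← Real.rpow_natCast ε 2,
          inv_mul_eq_div, ← Real.rpow_sub hε0]
        congr 1
        push_cast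
        ring
      calc lam ^ ((2:ℝ)-ρ) * ε^2 ≤ (1/ε) ^ ((2:ℝ)-ρ) * ε^2 :=
            mul_le_mul_of_nonneg_right h1 (by positivity)
        _ = ε ^ ρ := h2
    calc lam^3 * ε^2 = lam ^ ((1:ℝ)+ρ) * (lam ^ ((2:ℝ)-ρ) * ε^2) := e1
      _ ≤ lam ^ ((1:ℝ)+ρ) * ε ^ ρ := by
          apply mul_le_mul_of_nonneg_left e2 (by positivity)
  -- per index bound
  have hper : ∀ i ∈ I, |f i / g i - lam * v i|
      ≤ lam ^ ((1:ℝ)+ρ) * A i + 7/2 * (lam^3 * ε^2) * v i := by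
    intro i hi
    have hgi : (0:ℝ) < g i := lt_of_lt_of_le one_pos (hg1 i hi)
    have hup : f i / g i - lam * v i ≤ lam ^ ((1:ℝ)+ρ) * A i := by
      have h1 : f i / g i ≤ f i := div_le_self (hf0 i hi) (hg1 i hi)
      have h2 := (abs_le.1 (hfv i hi)).2
      linarith
    have hdown : -(lam ^ ((1:ℝ)+ρ) * A i + 7/2 * (lam^3 * ε^2) * v i)
        ≤ f i / g i - lam * v i := by
      -- f/g ≥ f*(2 - g)
      have hfg : f i * (2 - g i) ≤ f i / g i := by
        rw [le_div_iff₀ hgi]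
        have h1 : (2 - g i) * g i ≤ 1 := by nlinarith [hg1 i hi]
        calc f i * (2 - g i) * g i = f i * ((2 - g i) * g i) := by ring
          _ ≤ f i * 1 := mul_le_mul_of_nonneg_left h1 (hf0 i hi)
          _ = f i := by ring
      have hflam : f i ≤ 2 * lam * v i := by
        have h1 := (abs_le.1 (hfv i hi)).2
        have h2 : lam ^ ((1:ℝ)+ρ) * A i ≤ lam ^ ((1:ℝ)+ρ) * (ε^ρ * v i) :=
          mul_le_mul_of_nonneg_left (hAv i hi) (by positivity)
        have h3 : lam ^ ((1:ℝ)+ρ) * (ε^ρ * v i) ≤ lam * v i := by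
          calc lam ^ ((1:ℝ)+ρ) * (ε^ρ * v i) = (lam ^ ((1:ℝ)+ρ) * ε^ρ) * v i := by ring
            _ ≤ lam * v i := mul_le_mul_of_nonneg_right hkey1 (hv0 i hi)
        linarith
      have hcross : f i * (g i - 1) ≤ 7/2 * (lam^3 * ε^2) * v i := by
        have hg0 : 0 ≤ g i - 1 := by linarith [hg1 i hi]
        have h1 : f i * (g i - 1) ≤ (2 * lam * v i) * (g i - 1) :=
          mul_le_mul_of_nonneg_right hflam hg0
        have h2 : g i - 1 ≤ 7/4 * (lam^2 * v i) := by
          have h3 := hgb i hi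
          have h4 : lam^2/ε^ρ * A i ≤ lam^2 * v i := by
            have h5 : lam^2/ε^ρ * A i ≤ lam^2/ε^ρ * (ε^ρ * v i) :=
              mul_le_mul_of_nonneg_left (hAv i hi) (by positivity)
            have h6 : lam^2/ε^ρ * (ε^ρ * v i) = lam^2 * v i := by
              field_simp
            linarith
          linarith
        have h7 : (2 * lam * v i) * (g i - 1) ≤ (2 * lam * v i) * (7/4 * (lam^2 * v i)) :=
          mul_le_mul_of_nonneg_left h2
            (mul_nonneg (mul_nonneg (by norm_num) hlam.le) (hv0 i hi))
        have h8 : (2 * lam * v i) * (7/4 * (lam^2 * v i)) ≤ 7/2 * (lam^3 * ε^2) * v i := by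
          have hv2 : v i * v i ≤ ε^2 * v i :=
            mul_le_mul_of_nonneg_right (hvε i hi) (hv0 i hi)
          nlinarith [mul_le_mul_of_nonneg_left hv2 (pow_nonneg hlam.le 3)]
        linarith
      have h9 := (abs_le.1 (hfv i hi)).1
      have : lam * v i - f i / g i ≤ lam ^ ((1:ℝ)+ρ) * A i + f i * (g i - 1) := by
        have : lam * v i - f i * (2 - g i) = (lam * v i - f i) + f i * (g i - 1) := by ring
        nlinarith [hfg]
      linarith
    rw [abs_le]
    constructor
    · have h0 : 0 ≤ 7/2 * (lam^3*ε^2) * v i := by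
        have := hv0 i hi; positivity
      linarith [hdown]
    · have h0 : 0 ≤ 7/2 * (lam^3*ε^2) * v i := by
        have := hv0 i hi; positivity
      linarith [hup]
  -- sum up
  have hsum : |(∑ i ∈ I, f i / g i) - lam * (∑ i ∈ I, v i)|
      ≤ lam ^ ((1:ℝ)+ρ) * ε^ρ * (∑ i ∈ I, v i) + 7/2 * (lam^3*ε^2) * (∑ i ∈ I, v i) := by
    have e1 : (∑ i ∈ I, f i / g i) - lam * (∑ i ∈ I, v i)
        = ∑ i ∈ I, (f i / g i - lam * v i) := by
      rw [Finset.sum_sub_distrib, Finset.mul_sum]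
    rw [e1]
    calc |∑ i ∈ I, (f i / g i - lam * v i)| ≤ ∑ i ∈ I, |f i / g i - lam * v i| :=
          Finset.abs_sum_le_sum_abs _ _
      _ ≤ ∑ i ∈ I, (lam ^ ((1:ℝ)+ρ) * A i + 7/2 * (lam^3 * ε^2) * v i) :=
          Finset.sum_le_sum hper
      _ = lam ^ ((1:ℝ)+ρ) * (∑ i ∈ I, A i) + 7/2 * (lam^3*ε^2) * (∑ i ∈ I, v i) := by
          rw [Finset.sum_add_distrib, ← Finset.mul_sum, ← Finset.mul_sum]
      _ ≤ lam ^ ((1:ℝ)+ρ) * (ε^ρ * ∑ i ∈ I, v i) + 7/2 * (lam^3*ε^2) * (∑ i ∈ I, v i) := by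
          apply add_le_add_left
          apply mul_le_mul_of_nonneg_left _ (by positivity)
          calc ∑ i ∈ I, A i ≤ ∑ i ∈ I, ε^ρ * v i := Finset.sum_le_sum hAv
            _ = ε^ρ * ∑ i ∈ I, v i := by rw [Finset.mul_sum]
      _ = lam ^ ((1:ℝ)+ρ) * ε^ρ * (∑ i ∈ I, v i) + 7/2 * (lam^3*ε^2) * (∑ i ∈ I, v i) := by
          ring
  have hbig : |(∑ i ∈ I, f i / g i) - lam * (∑ i ∈ I, v i)|
      ≤ 45/8 * (lam ^ ((1:ℝ)+ρ) * ε^ρ) := by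
    have h1 : 7/2 * (lam^3*ε^2) ≤ 7/2 * (lam ^ ((1:ℝ)+ρ) * ε^ρ) := by nlinarith [hkey2]
    calc |(∑ i ∈ I, f i / g i) - lam * (∑ i ∈ I, v i)|
        ≤ lam ^ ((1:ℝ)+ρ) * ε^ρ * (∑ i ∈ I, v i) + 7/2 * (lam^3*ε^2) * (∑ i ∈ I, v i) := hsum
      _ ≤ lam ^ ((1:ℝ)+ρ) * ε^ρ * (5/4) + 7/2 * (lam ^ ((1:ℝ)+ρ) * ε^ρ) * (5/4) := by
          have h2 : lam ^ ((1:ℝ)+ρ) * ε^ρ * (∑ i ∈ I, v i) ≤ lam ^ ((1:ℝ)+ρ) * ε^ρ * (5/4) :=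
            mul_le_mul_of_nonneg_left hS54 (by positivity)
          have h3 : 7/2 * (lam^3*ε^2) * (∑ i ∈ I, v i)
              ≤ 7/2 * (lam ^ ((1:ℝ)+ρ) * ε^ρ) * (5/4) := by
            have h4 : 7/2 * (lam^3*ε^2) * (∑ i ∈ I, v i)
                ≤ 7/2 * (lam ^ ((1:ℝ)+ρ) * ε^ρ) * (∑ i ∈ I, v i) :=
              mul_le_mul_of_nonneg_right h1 hSv0
            have h5 : 7/2 * (lam ^ ((1:ℝ)+ρ) * ε^ρ) * (∑ i ∈ I, v i)
                ≤ 7/2 * (lam ^ ((1:ℝ)+ρ) * ε^ρ) * (5/4) :=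
              mul_le_mul_of_nonneg_left hS54 (by positivity)
            linarith
          linarith
      _ = 45/8 * (lam ^ ((1:ℝ)+ρ) * ε^ρ) := by ring
  have hfinal : |(∑ i ∈ I, f i / g i) - lam| ≤ lam * δ^2 + 45/8 * (lam ^ ((1:ℝ)+ρ) * ε^ρ) := by
    have h1 : |lam * (∑ i ∈ I, v i) - lam| ≤ lam * δ^2 := by
      rw [show lam * (∑ i ∈ I, v i) - lam = lam * ((∑ i ∈ I, v i) - 1) by ring,
        abs_mul, abs_of_nonneg hlam.le]
      exact mul_le_mul_of_nonneg_left hS hlam.le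
    calc |(∑ i ∈ I, f i / g i) - lam|
        ≤ |(∑ i ∈ I, f i / g i) - lam * (∑ i ∈ I, v i)| + |lam * (∑ i ∈ I, v i) - lam| :=
          abs_sub_le _ _ _
      _ ≤ 45/8 * (lam ^ ((1:ℝ)+ρ) * ε^ρ) + lam * δ^2 := add_le_add hbig h1
      _ = lam * δ^2 + 45/8 * (lam ^ ((1:ℝ)+ρ) * ε^ρ) := by ring
  have hlast : 45/8 * (lam ^ ((1:ℝ)+ρ) * ε^ρ) ≤ 6 * lam ^ ((1:ℝ)+ρ) * ε^ρ := by
    nlinarith [hC0]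
  calc |(∑ i ∈ I, f i / g i) - lam| ≤ lam * δ^2 + 45/8 * (lam ^ ((1:ℝ)+ρ) * ε^ρ) := hfinal
    _ ≤ lam * δ^2 + 6 * lam ^ (1+ρ) * ε^ρ := by linarith

set_option maxHeartbeats 1000000 in
lemma cdb_step {Ω : Type*} {m0 : MeasurableSpace Ω} (μ : Measure Ω) [IsProbabilityMeasure μ]
    {m : MeasurableSpace Ω} (hm : m ≤ m0)
    {ρ ε lam : ℝ} (hρ0 : 0 < ρ) (hρ1 : ρ ≤ 1) (hε0 : 0 < ε)
    (hlam0 : 0 ≤ lam) (hlam1 : lam * ε ≤ 1)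
    (X : Ω → ℝ) (hX : Integrable X μ) (hmd : μ[X|m] =ᵐ[μ] 0)
    (hXsq : Integrable (fun ω => (X ω) ^ 2) μ)
    (hXA : Integrable (fun ω => |X ω| ^ (2 + ρ) * Real.exp (max (X ω) 0 / ε)) μ)
    (hXexp : Integrable (fun ω => Real.exp (lam * X ω)) μ)
    (hXmul : Integrable (fun ω => X ω * Real.exp (lam * X ω)) μ)
    (hA1 : ∀ᵐ ω ∂μ,
      (μ[fun ω => |X ω| ^ (2 + ρ) * Real.exp (max (X ω) 0 / ε)|m]) ω
        ≤ ε ^ ρ * (μ[fun ω => (X ω) ^ 2|m]) ω) :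
    ∀ᵐ ω ∂μ,
      (0 ≤ (μ[fun ω => (X ω) ^ 2|m]) ω)
      ∧ (0 ≤ (μ[fun ω => |X ω| ^ (2 + ρ) * Real.exp (max (X ω) 0 / ε)|m]) ω)
      ∧ ((μ[fun ω => |X ω| ^ (2 + ρ) * Real.exp (max (X ω) 0 / ε)|m]) ω
          ≤ ε ^ ρ * (μ[fun ω => (X ω) ^ 2|m]) ω)
      ∧ (1 ≤ (μ[fun ω => Real.exp (lam * X ω)|m]) ω)
      ∧ (0 ≤ (μ[fun ω => X ω * Real.exp (lam * X ω)|m]) ω)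
      ∧ (|(μ[fun ω => X ω * Real.exp (lam * X ω)|m]) ω
            - lam * (μ[fun ω => (X ω) ^ 2|m]) ω|
          ≤ lam ^ (1 + ρ) * (μ[fun ω => |X ω| ^ (2 + ρ) * Real.exp (max (X ω) 0 / ε)|m]) ω)
      ∧ ((μ[fun ω => Real.exp (lam * X ω)|m]) ω - 1
          ≤ 3/4 * (lam ^ 2 * (μ[fun ω => (X ω) ^ 2|m]) ω)
            + lam ^ 2 / ε ^ ρ
              * (μ[fun ω => |X ω| ^ (2 + ρ) * Real.exp (max (X ω) 0 / ε)|m]) ω)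
      ∧ ((μ[fun ω => (X ω) ^ 2|m]) ω ≤ ε ^ 2) := by
  have hεp : (0:ℝ) < ε ^ ρ := Real.rpow_pos_of_pos hε0 ρ
  set V := μ[fun ω => (X ω) ^ 2|m] with hV
  set A := μ[fun ω => |X ω| ^ (2 + ρ) * Real.exp (max (X ω) 0 / ε)|m] with hA
  set G := μ[fun ω => Real.exp (lam * X ω)|m] with hG
  set F := μ[fun ω => X ω * Real.exp (lam * X ω)|m] with hF
  -- c1
  have hc1 : ∀ᵐ ω ∂μ, 0 ≤ V ω :=
    condExp_nonneg (Eventually.of_forall fun ω => sq_nonneg _)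
  -- c2
  have hc2 : ∀ᵐ ω ∂μ, 0 ≤ A ω :=
    condExp_nonneg (Eventually.of_forall fun ω => by positivity)
  -- c4 : 1 ≤ G
  have hint1 : Integrable (fun ω => 1 + lam * X ω) μ :=
    (integrable_const 1).add (hX.const_mul lam)
  have he1 : μ[fun ω => 1 + lam * X ω|m]
      =ᵐ[μ] fun ω => 1 + lam * (μ[X|m]) ω := by
    have h1 : μ[fun ω => 1 + lam * X ω|m]
        =ᵐ[μ] μ[(fun _ => (1:ℝ))|m] + μ[lam • X|m] :=
      condExp_add (integrable_const 1) (hX.smul lam) m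
    have h2 : μ[(fun _ => (1:ℝ))|m] = fun _ => (1:ℝ) := condExp_const hm 1
    have h3 : μ[lam • X|m] =ᵐ[μ] lam • μ[X|m] := condExp_smul lam X m
    filter_upwards [h1, h3] with ω e1 e3
    rw [e1]
    simp only [Pi.add_apply, h2, Pi.smul_apply, smul_eq_mul, e3]
  have hc4 : ∀ᵐ ω ∂μ, 1 ≤ G ω := by
    have hmono := condExp_mono (m := m) hint1 hXexp
      (Eventually.of_forall fun ω => by
        show 1 + lam * X ω ≤ Real.exp (lam * X ω)
        linarith [Real.add_one_le_exp (lam * X ω)])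
    filter_upwards [hmono, he1, hmd] with ω h1 h2 h3
    rw [h2] at h1
    simp only [Pi.zero_apply] at h3
    rw [h3] at h1
    simpa using h1
  -- c5 : 0 ≤ F
  have hc5 : ∀ᵐ ω ∂μ, 0 ≤ F ω := by
    have hptw : ∀ ω, X ω ≤ X ω * Real.exp (lam * X ω) := by
      intro ω
      rcases le_total 0 (X ω) with hx | hx
      · calc X ω = X ω * 1 := by ring
          _ ≤ X ω * Real.exp (lam * X ω) :=
            mul_le_mul_of_nonneg_left (Real.one_le_exp (by positivity)) hx
      · have hexple : Real.exp (lam * X ω) ≤ 1 :=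
          Real.exp_le_one_iff.2 (mul_nonpos_of_nonneg_of_nonpos hlam0 hx)
        calc X ω = X ω * 1 := by ring
          _ ≤ X ω * Real.exp (lam * X ω) := by
            apply mul_le_mul_of_nonpos_left hexple hx
    have hmono := condExp_mono (m := m) hX hXmul (Eventually.of_forall hptw)
    filter_upwards [hmono, hmd] with ω h1 h2
    simp only [Pi.zero_apply] at h2
    rw [h2] at h1
    exact h1
  -- notational abbreviations for base integrands
  set sq : Ω → ℝ := fun ω => (X ω) ^ 2 with hsq_def
  set D0 : Ω → ℝ := fun ω => |X ω| ^ (2 + ρ) * Real.exp (max (X ω) 0 / ε) with hD0_def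
  -- c6 : |F - lam V| ≤ lam^(1+ρ) A
  have hDint : Integrable (fun ω => lam ^ (1+ρ) * D0 ω) μ := hXA.const_mul _
  have hφint : Integrable (fun ω => X ω * Real.exp (lam * X ω) - (X ω + lam * (X ω)^2)) μ :=
    hXmul.sub (hX.add (hXsq.const_mul lam))
  have heφ : μ[fun ω => X ω * Real.exp (lam * X ω) - (X ω + lam * (X ω)^2)|m]
      =ᵐ[μ] fun ω => F ω - ((μ[X|m]) ω + lam * V ω) := by
    have h0 : (fun ω => X ω * Real.exp (lam * X ω) - (X ω + lam * (X ω)^2))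
        =ᵐ[μ] (fun ω => X ω * Real.exp (lam * X ω)) - (X + lam • sq) :=
      Eventually.of_forall fun ω => by
        simp [Pi.sub_apply, Pi.add_apply, Pi.smul_apply, smul_eq_mul, hsq_def]
    have h1 : μ[(fun ω => X ω * Real.exp (lam * X ω)) - (X + lam • sq)|m]
        =ᵐ[μ] μ[fun ω => X ω * Real.exp (lam * X ω)|m] - μ[X + lam • sq|m] :=
      condExp_sub hXmul (hX.add (hXsq.smul lam)) m
    have h2 : μ[X + lam • sq|m] =ᵐ[μ] μ[X|m] + μ[lam • sq|m] :=
      condExp_add hX (hXsq.smul lam) m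
    have h3 : μ[lam • sq|m] =ᵐ[μ] lam • μ[sq|m] := condExp_smul lam sq m
    calc μ[fun ω => X ω * Real.exp (lam * X ω) - (X ω + lam * (X ω)^2)|m]
        =ᵐ[μ] μ[(fun ω => X ω * Real.exp (lam * X ω)) - (X + lam • sq)|m] :=
          condExp_congr_ae h0
      _ =ᵐ[μ] fun ω => F ω - ((μ[X|m]) ω + lam * V ω) := by
          filter_upwards [h1, h2, h3] with ω e1 e2 e3
          rw [e1]
          simp only [Pi.sub_apply, Pi.add_apply, Pi.smul_apply, smul_eq_mul, e2, e3]
          rfl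
  have hDcond : μ[fun ω => lam ^ (1+ρ) * D0 ω|m] =ᵐ[μ] fun ω => lam ^ (1+ρ) * A ω := by
    have h0 : (fun ω => lam ^ (1+ρ) * D0 ω) =ᵐ[μ] (lam ^ (1+ρ)) • D0 :=
      Eventually.of_forall fun ω => by simp [Pi.smul_apply, smul_eq_mul]
    calc μ[fun ω => lam ^ (1+ρ) * D0 ω|m] =ᵐ[μ] μ[(lam ^ (1+ρ)) • D0|m] := condExp_congr_ae h0
      _ =ᵐ[μ] (lam ^ (1+ρ)) • μ[D0|m] := condExp_smul _ _ _
      _ = fun ω => lam ^ (1+ρ) * A ω := rfl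
  have hup := condExp_mono (m := m) hφint hDint (Eventually.of_forall fun ω => by
    show X ω * Real.exp (lam * X ω) - (X ω + lam * (X ω)^2) ≤ lam ^ (1+ρ) * D0 ω
    have h := (abs_le.1 (cdb_P1 hρ0 hρ1 hε0 hlam0 hlam1 (X ω))).2
    rw [hD0_def]
    linarith)
  have hdn := condExp_mono (m := m) hDint.neg hφint (Eventually.of_forall fun ω => by
    show -(lam ^ (1+ρ) * D0 ω) ≤ X ω * Real.exp (lam * X ω) - (X ω + lam * (X ω)^2)
    have h := (abs_le.1 (cdb_P1 hρ0 hρ1 hε0 hlam0 hlam1 (X ω))).1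
    rw [hD0_def]
    linarith)
  have hDnegcond : μ[-(fun ω => lam ^ (1+ρ) * D0 ω)|m] =ᵐ[μ] fun ω => -(lam ^ (1+ρ) * A ω) := by
    calc μ[-(fun ω => lam ^ (1+ρ) * D0 ω)|m]
        =ᵐ[μ] -μ[fun ω => lam ^ (1+ρ) * D0 ω|m] := condExp_neg _ _
      _ =ᵐ[μ] fun ω => -(lam ^ (1+ρ) * A ω) := by
          filter_upwards [hDcond] with ω e
          simp only [Pi.neg_apply, e]
  have hc6 : ∀ᵐ ω ∂μ, |F ω - lam * V ω| ≤ lam ^ (1+ρ) * A ω := by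
    filter_upwards [hup, hdn, heφ, hDcond, hDnegcond, hmd] with ω h1 h2 h3 h4 h5 h6
    rw [h3, h4] at h1
    rw [h3, h5] at h2
    simp only [Pi.zero_apply] at h6
    rw [h6] at h1 h2
    rw [abs_le]
    constructor <;> [linarith; linarith]
  -- c7 : G - 1 ≤ 3/4 lam² V + lam²/ε^ρ A
  have hψint : Integrable (fun ω => Real.exp (lam * X ω) - (1 + lam * X ω)) μ :=
    hXexp.sub hint1
  have hRint : Integrable (fun ω => 3/4*lam^2 * (X ω)^2 + lam^2/ε^ρ * D0 ω) μ :=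
    (hXsq.const_mul _).add (hXA.const_mul _)
  have heψ : μ[fun ω => Real.exp (lam * X ω) - (1 + lam * X ω)|m]
      =ᵐ[μ] fun ω => G ω - (1 + lam * (μ[X|m]) ω) := by
    have h0 : (fun ω => Real.exp (lam * X ω) - (1 + lam * X ω))
        =ᵐ[μ] (fun ω => Real.exp (lam * X ω)) - (fun ω => 1 + lam * X ω) :=
      Eventually.of_forall fun ω => rfl
    calc μ[fun ω => Real.exp (lam * X ω) - (1 + lam * X ω)|m]
        =ᵐ[μ] μ[(fun ω => Real.exp (lam * X ω)) - (fun ω => 1 + lam * X ω)|m] :=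
          condExp_congr_ae h0
      _ =ᵐ[μ] μ[fun ω => Real.exp (lam * X ω)|m] - μ[fun ω => 1 + lam * X ω|m] :=
          condExp_sub hXexp hint1 m
      _ =ᵐ[μ] fun ω => G ω - (1 + lam * (μ[X|m]) ω) := by
          filter_upwards [he1] with ω e
          simp only [Pi.sub_apply, e]
          rfl
  have hRcond : μ[fun ω => 3/4*lam^2 * (X ω)^2 + lam^2/ε^ρ * D0 ω|m]
      =ᵐ[μ] fun ω => 3/4*lam^2 * V ω + lam^2/ε^ρ * A ω := by
    have h0 : (fun ω => 3/4*lam^2 * (X ω)^2 + lam^2/ε^ρ * D0 ω)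
        =ᵐ[μ] ((3/4*lam^2) • sq + (lam^2/ε^ρ) • D0) :=
      Eventually.of_forall fun ω => by
        simp [Pi.add_apply, Pi.smul_apply, smul_eq_mul, hsq_def]
    calc μ[fun ω => 3/4*lam^2 * (X ω)^2 + lam^2/ε^ρ * D0 ω|m]
        =ᵐ[μ] μ[(3/4*lam^2) • sq + (lam^2/ε^ρ) • D0|m] := condExp_congr_ae h0
      _ =ᵐ[μ] μ[(3/4*lam^2) • sq|m] + μ[(lam^2/ε^ρ) • D0|m] :=
          condExp_add (hXsq.smul _) (hXA.smul _) m
      _ =ᵐ[μ] fun ω => 3/4*lam^2 * V ω + lam^2/ε^ρ * A ω := by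
          filter_upwards [condExp_smul (μ := μ) (m := m) (3/4*lam^2 : ℝ) sq,
            condExp_smul (μ := μ) (m := m) (lam^2/ε^ρ : ℝ) D0] with ω e1 e2
          simp only [Pi.add_apply, e1, e2, Pi.smul_apply, smul_eq_mul]
          rfl
  have hmono7 := condExp_mono (m := m) hψint hRint (Eventually.of_forall fun ω => by
    show Real.exp (lam * X ω) - (1 + lam * X ω)
        ≤ 3/4*lam^2 * (X ω)^2 + lam^2/ε^ρ * D0 ω
    have h := cdb_P2 hρ0 hρ1 hε0 hlam0 hlam1 (X ω)
    rw [hD0_def]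
    linarith)
  have hc7 : ∀ᵐ ω ∂μ, G ω - 1 ≤ 3/4 * (lam^2 * V ω) + lam^2/ε^ρ * A ω := by
    filter_upwards [hmono7, heψ, hRcond, hmd] with ω h1 h2 h3 h4
    rw [h2, h3] at h1
    simp only [Pi.zero_apply] at h4
    rw [h4] at h1
    simp only [mul_zero, add_zero] at h1
    linarith
  -- c8 : V ≤ ε²  via Young family
  have hq8 : ∀ q : ℚ, 0 < (q:ℝ) → ∀ᵐ ω ∂μ,
      V ω ≤ (2/(2+ρ))/(q:ℝ)^((2+ρ)/2) * A ω + (ρ/(2+ρ))*(q:ℝ)^((2+ρ)/ρ) := by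
    intro q hq
    set c1q : ℝ := (2/(2+ρ))/(q:ℝ)^((2+ρ)/2) with hc1q
    set c2q : ℝ := (ρ/(2+ρ))*(q:ℝ)^((2+ρ)/ρ) with hc2q
    have hWint : Integrable (fun ω => c1q * D0 ω + c2q) μ :=
      (hXA.const_mul _).add (integrable_const _)
    have hWcond : μ[fun ω => c1q * D0 ω + c2q|m] =ᵐ[μ] fun ω => c1q * A ω + c2q := by
      have h0 : (fun ω => c1q * D0 ω + c2q) =ᵐ[μ] (c1q • D0 + fun _ => c2q) :=
        Eventually.of_forall fun ω => rfl
      calc μ[fun ω => c1q * D0 ω + c2q|m]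
          =ᵐ[μ] μ[c1q • D0 + fun _ => c2q|m] := condExp_congr_ae h0
        _ =ᵐ[μ] μ[c1q • D0|m] + μ[fun _ => c2q|m] :=
            condExp_add (hXA.smul _) (integrable_const _) m
        _ =ᵐ[μ] fun ω => c1q * A ω + c2q := by
            have hcc : μ[fun _ => c2q|m] = fun _ => c2q := condExp_const hm c2q
            filter_upwards [condExp_smul (μ := μ) (m := m) c1q D0] with ω e1
            simp only [Pi.add_apply, e1, Pi.smul_apply, smul_eq_mul, hcc]
            rfl
    have hmono8 := condExp_mono (m := m) hXsq hWint (Eventually.of_forall fun ω => by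
      show (X ω)^2 ≤ c1q * D0 ω + c2q
      have h := cdb_P3 hρ0 hε0 hq (X ω)
      have e : (2/(2+ρ)) * (D0 ω) / (q:ℝ)^((2+ρ)/2) = c1q * D0 ω := by
        rw [hc1q]; ring
      rw [hD0_def] at e ⊢
      rw [hc2q]
      linarith)
    filter_upwards [hmono8, hWcond] with ω h1 h2
    rw [h2] at h1
    exact h1
  have hQ : ∀ᵐ ω ∂μ, ∀ q : ℚ, 0 < (q:ℝ) →
      V ω ≤ (2/(2+ρ))/(q:ℝ)^((2+ρ)/2) * A ω + (ρ/(2+ρ))*(q:ℝ)^((2+ρ)/ρ) := by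
    rw [ae_all_iff]
    intro q
    by_cases hq : 0 < (q:ℝ)
    · exact (hq8 q hq).mono fun ω h _ => h
    · exact Eventually.of_forall fun ω h => absurd h hq
  have hc8 : ∀ᵐ ω ∂μ, V ω ≤ ε ^ 2 := by
    filter_upwards [hQ, hA1, hc1, hc2] with ω hQω hA1ω hV0ω hA0ω
    apply cdb_vsmall hρ0 hρ1 hε0 hV0ω
    intro q hq
    have h := hQω q hq
    have hc1q0 : (0:ℝ) ≤ (2/(2+ρ))/(q:ℝ)^((2+ρ)/2) := by positivity
    have h2 : (2/(2+ρ))/(q:ℝ)^((2+ρ)/2) * A ω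
        ≤ (2/(2+ρ))/(q:ℝ)^((2+ρ)/2) * (ε^ρ * V ω) :=
      mul_le_mul_of_nonneg_left hA1ω hc1q0
    have e : (2/(2+ρ)) * (ε^ρ * V ω)/(q:ℝ)^((2+ρ)/2)
        = (2/(2+ρ))/(q:ℝ)^((2+ρ)/2) * (ε^ρ * V ω) := by ring
    linarith
  filter_upwards [hc1, hc2, hA1, hc4, hc5, hc6, hc7, hc8] with ω h1 h2 h3 h4 h5 h6 h7 h8
  exact ⟨h1, h2, h3, h4, h5, h6, h7, h8⟩

end CDBAux

theorem conjugate_drift_bound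
    {Ω : Type*} {m0 : MeasurableSpace Ω} (μ : Measure Ω) [IsProbabilityMeasure μ]
    (n : ℕ) (ξ : ℕ → Ω → ℝ) (𝓕 : ℕ → MeasurableSpace Ω)
    (h𝓕le : ∀ i, 𝓕 i ≤ m0) (h𝓕mono : Monotone 𝓕)
    (ρ ε δ : ℝ) (hρ0 : 0 < ρ) (hρ1 : ρ ≤ 1)
    (hε0 : 0 < ε) (hε1 : ε ≤ 1 / 2) (hδ0 : 0 ≤ δ) (hδ1 : δ ≤ 1 / 2)
    (hmeas : ∀ i ∈ Icc 1 n, Measurable[𝓕 i] (ξ i))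
    (hint : ∀ i ∈ Icc 1 n, Integrable (ξ i) μ)
    (hmd : ∀ i ∈ Icc 1 n, μ[ξ i|𝓕 (i - 1)] =ᵐ[μ] 0)
    (hintsq : ∀ i ∈ Icc 1 n, Integrable (fun ω => (ξ i ω) ^ 2) μ)
    (hintA1 : ∀ i ∈ Icc 1 n,
      Integrable (fun ω => |ξ i ω| ^ (2 + ρ) * Real.exp (max (ξ i ω) 0 / ε)) μ)
    (hA1 : ∀ i ∈ Icc 1 n, ∀ᵐ ω ∂μ,
      (μ[fun ω => |ξ i ω| ^ (2 + ρ) * Real.exp (max (ξ i ω) 0 / ε)|𝓕 (i - 1)]) ω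
        ≤ ε ^ ρ * (μ[fun ω => (ξ i ω) ^ 2|𝓕 (i - 1)]) ω)
    (hA2 : ∀ᵐ ω ∂μ,
      |(∑ i ∈ Icc 1 n, (μ[fun ω => (ξ i ω) ^ 2|𝓕 (i - 1)]) ω) - 1| ≤ δ ^ 2)
    (lam : ℝ) (hlam0 : 0 ≤ lam) (hlam1 : lam ≤ 1 / ε)
    (hintexp : ∀ i ∈ Icc 1 n, Integrable (fun ω => Real.exp (lam * ξ i ω)) μ)
    (hintmulexp : ∀ i ∈ Icc 1 n,
      Integrable (fun ω => ξ i ω * Real.exp (lam * ξ i ω)) μ) :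
    ∀ᵐ ω ∂μ,
      |(∑ i ∈ Icc 1 n,
          (μ[fun ω => ξ i ω * Real.exp (lam * ξ i ω)|𝓕 (i - 1)]) ω
            / (μ[fun ω => Real.exp (lam * ξ i ω)|𝓕 (i - 1)]) ω) - lam|
        ≤ lam * δ ^ 2 + 6 * lam ^ (1 + ρ) * ε ^ ρ := by
  have hlam1' : lam * ε ≤ 1 := (le_div_iff₀ hε0).1 hlam1
  have hδsq : δ ^ 2 ≤ 1/4 := by nlinarith
  have hstep := fun (i : ℕ) (hi : i ∈ Icc 1 n) =>
    cdb_step μ (h𝓕le (i-1)) hρ0 hρ1 hε0 hlam0 hlam1' (ξ i) (hint i hi) (hmd i hi)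
      (hintsq i hi) (hintA1 i hi) (hintexp i hi) (hintmulexp i hi) (hA1 i hi)
  have hall : ∀ᵐ ω ∂μ, ∀ i, i ∈ Icc 1 n →
      ((0 ≤ (μ[fun ω => (ξ i ω) ^ 2|𝓕 (i-1)]) ω)
      ∧ (0 ≤ (μ[fun ω => |ξ i ω| ^ (2 + ρ) * Real.exp (max (ξ i ω) 0 / ε)|𝓕 (i-1)]) ω)
      ∧ ((μ[fun ω => |ξ i ω| ^ (2 + ρ) * Real.exp (max (ξ i ω) 0 / ε)|𝓕 (i-1)]) ω
          ≤ ε ^ ρ * (μ[fun ω => (ξ i ω) ^ 2|𝓕 (i-1)]) ω)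
      ∧ (1 ≤ (μ[fun ω => Real.exp (lam * ξ i ω)|𝓕 (i-1)]) ω)
      ∧ (0 ≤ (μ[fun ω => ξ i ω * Real.exp (lam * ξ i ω)|𝓕 (i-1)]) ω)
      ∧ (|(μ[fun ω => ξ i ω * Real.exp (lam * ξ i ω)|𝓕 (i-1)]) ω
            - lam * (μ[fun ω => (ξ i ω) ^ 2|𝓕 (i-1)]) ω|
          ≤ lam ^ (1 + ρ)
              * (μ[fun ω => |ξ i ω| ^ (2 + ρ) * Real.exp (max (ξ i ω) 0 / ε)|𝓕 (i-1)]) ω)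
      ∧ ((μ[fun ω => Real.exp (lam * ξ i ω)|𝓕 (i-1)]) ω - 1
          ≤ 3/4 * (lam ^ 2 * (μ[fun ω => (ξ i ω) ^ 2|𝓕 (i-1)]) ω)
            + lam ^ 2 / ε ^ ρ
              * (μ[fun ω => |ξ i ω| ^ (2 + ρ) * Real.exp (max (ξ i ω) 0 / ε)|𝓕 (i-1)]) ω)
      ∧ ((μ[fun ω => (ξ i ω) ^ 2|𝓕 (i-1)]) ω ≤ ε ^ 2)) := by
    rw [ae_all_iff]
    intro i
    by_cases hi : i ∈ Icc 1 n
    · exact (hstep i hi).mono fun ω h _ => h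
    · exact Filter.Eventually.of_forall fun ω h => absurd h hi
  filter_upwards [hall, hA2] with ω hω hSω
  exact cdb_main_arith (Icc 1 n)
    (fun i => (μ[fun ω => (ξ i ω) ^ 2|𝓕 (i-1)]) ω)
    (fun i => (μ[fun ω => |ξ i ω| ^ (2 + ρ) * Real.exp (max (ξ i ω) 0 / ε)|𝓕 (i-1)]) ω)
    (fun i => (μ[fun ω => ξ i ω * Real.exp (lam * ξ i ω)|𝓕 (i-1)]) ω)
    (fun i => (μ[fun ω => Real.exp (lam * ξ i ω)|𝓕 (i-1)]) ω)
    hρ0 hρ1 hε0 hδ0 hlam0 hlam1'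
    (fun i hi => (hω i hi).1)
    (fun i hi => (hω i hi).2.1)
    (fun i hi => (hω i hi).2.2.1)
    (fun i hi => (hω i hi).2.2.2.1)
    (fun i hi => (hω i hi).2.2.2.2.1)
    (fun i hi => (hω i hi).2.2.2.2.2.1)
    (fun i hi => (hω i hi).2.2.2.2.2.2.1)
    (fun i hi => (hω i hi).2.2.2.2.2.2.2)
    hSω hδsq
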